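/- For every instance of the simplified rule (□_R) of LNS_Kt*, i.e., with conclusion G ⇗ Γ ⇒ Δ,□A and premiss G ⇗ Γ ⇒ Δ,□A ↗ ε ⇒ A (where G is a possibly empty context, ⇗ stands for either ↗ or ↙, and ε is the empty multiset): if the conclusion is falsifiable, then the premiss is falsifiable; and likewise for the rule (■_R) with conclusion G ⇗ Γ ⇒ Δ,■A and premiss G ⇗ Γ ⇒ Δ,■A ↙ ε ⇒ A. -/
import Mathlib


/-- Formulae of tense logic: atoms (indexed by naturals), ⊥, →, □, ◇, ■, ◆. -/
inductive Formula : Type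
  | atom : ℕ → Formula
  | bot : Formula
  | imp : Formula → Formula → Formula
  | box : Formula → Formula
  | dia : Formula → Formula
  | bbox : Formula → Formula
  | bdia : Formula → Formula

def Formula.neg (A : Formula) : Formula := A.imp .bot
def Formula.and (A B : Formula) : Formula := (A.imp B.neg).neg
def Formula.or (A B : Formula) : Formula := A.neg.imp B
def Formula.top : Formula := Formula.bot.imp .bot

/-- Formulas built from atoms, ⊥, →, □, ■ only (no diamonds). -/
def Formula.NoDia : Formula → Prop
  | .atom _ => True
  | .bot => True
  | .imp A B => A.NoDia ∧ B.NoDia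
  | .box A => A.NoDia
  | .dia _ => False
  | .bbox A => A.NoDia
  | .bdia _ => False

/-- Structural connectives: `up` is ↗ and `dn` is ↙. -/
inductive Dir : Type
  | up
  | dn

/-- Linear nested sequents: a nonempty list of components `Γ ⇒ Δ`
joined by the structural connectives ↗ (`up`) and ↙ (`dn`). -/
inductive LNS : Type
  | single (Γ Δ : Multiset Formula) : LNS
  | up (Γ Δ : Multiset Formula) (S : LNS) : LNS
  | dn (Γ Δ : Multiset Formula) (S : LNS) : LNS

/-- A (possibly empty) context: a list of components, each together with the
structural connective joining it to what follows. -/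
abbrev Ctx := List (Multiset Formula × Multiset Formula × Dir)

/-- `plug G S` is the linear nested sequent `G ⇗ S` (just `S` when `G` is empty). -/
def plug : Ctx → LNS → LNS
  | [], S => S
  | (Γ, Δ, Dir.up) :: G, S => LNS.up Γ Δ (plug G S)
  | (Γ, Δ, Dir.dn) :: G, S => LNS.dn Γ Δ (plug G S)

/-- The structural connective joining the context to what follows it (none if empty). -/
def lastDir : Ctx → Option Dir
  | [] => none
  | [(_, _, d)] => some d
  | _ :: G => lastDir G

/-- Kripke forcing for tense logic. -/
def Force {W : Type} (R : W → W → Prop) (V : W → ℕ → Prop) : W → Formula → Prop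
  | w, .atom p => V w p
  | _, .bot => False
  | w, .imp A B => Force R V w A → Force R V w B
  | w, .box A => ∀ v, R w v → Force R V v A
  | w, .dia A => ∃ v, R w v ∧ Force R V v A
  | w, .bbox A => ∀ v, R v w → Force R V v A
  | w, .bdia A => ∃ v, R v w ∧ Force R V v A

/-- Conjunction of a finite multiset of formulae (empty conjunction is ⊤). -/
noncomputable def bigAnd (Γ : Multiset Formula) : Formula :=
  Γ.toList.foldr Formula.and Formula.top

/-- Disjunction of a finite multiset of formulae (empty disjunction is ⊥). -/
noncomputable def bigOr (Δ : Multiset Formula) : Formula :=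
  Δ.toList.foldr Formula.or Formula.bot

/-- The formula translation τ of a linear nested sequent. -/
noncomputable def tau : LNS → Formula
  | .single Γ Δ => (bigAnd Γ).imp (bigOr Δ)
  | .up Γ Δ S => (bigAnd Γ).imp ((bigOr Δ).or (tau S).box)
  | .dn Γ Δ S => (bigAnd Γ).imp ((bigOr Δ).or (tau S).bbox)

/-- A formula is valid if it is forced at every world of every Kripke model. -/
def Valid (A : Formula) : Prop :=
  ∀ (W : Type) (_ : Nonempty W) (R : W → W → Prop) (V : W → ℕ → Prop) (w : W),
    Force R V w A

/-- A linear nested sequent is falsifiable if its formula translation fails at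
some world of some Kripke model. -/
def Falsifiable (S : LNS) : Prop :=
  ∃ (W : Type) (_ : Nonempty W) (R : W → W → Prop) (V : W → ℕ → Prop) (w : W),
    ¬ Force R V w (tau S)

section Aux

variable {W : Type} {R : W → W → Prop} {V : W → ℕ → Prop}

lemma force_or {w : W} {A B : Formula} :
    Force R V w (A.or B) ↔ Force R V w A ∨ Force R V w B := by
  simp only [Formula.or, Formula.neg, Force]
  tauto

lemma force_foldr_or {w : W} (l : List Formula) :
    Force R V w (l.foldr Formula.or Formula.bot) ↔ ∃ B ∈ l, Force R V w B := by
  induction l with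
  | nil => simp [Force]
  | cons a l ih => simp [force_or, ih]

lemma force_bigOr {w : W} {Δ : Multiset Formula} :
    Force R V w (bigOr Δ) ↔ ∃ B ∈ Δ, Force R V w B := by
  rw [bigOr, force_foldr_or]
  simp [Multiset.mem_toList]

lemma force_top {w : W} : Force R V w Formula.top := fun h => h

lemma force_bigAnd_zero {w : W} : Force R V w (bigAnd 0) := by
  have : bigAnd 0 = Formula.top := by simp [bigAnd]
  rw [this]; exact force_top

lemma plug_mono {S S' : LNS}
    (h : ∀ w : W, Force R V w (tau S') → Force R V w (tau S)) (G : Ctx) :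
    ∀ w : W, Force R V w (tau (plug G S')) → Force R V w (tau (plug G S)) := by
  induction G with
  | nil => exact h
  | cons c G ih =>
    obtain ⟨Γ, Δ, d⟩ := c
    cases d <;>
    · intro w hw
      simp only [plug, tau, Force] at hw ⊢
      intro hΓ hΔ v hv
      exact ih v (hw hΓ hΔ v hv)

lemma base_box {Γ Δ : Multiset Formula} {A : Formula} {w : W} :
    Force R V w (tau (LNS.up Γ (A.box ::ₘ Δ) (.single 0 {A}))) →
      Force R V w (tau (LNS.single Γ (A.box ::ₘ Δ))) := by
  simp only [tau, Force]
  intro h hΓ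
  by_contra hΔ
  rw [force_bigOr] at hΔ
  push_neg at hΔ
  have hbox : ¬ Force R V w (Formula.box A) := hΔ _ (Multiset.mem_cons_self _ _)
  simp only [Force] at hbox
  push_neg at hbox
  obtain ⟨v, hv, hA⟩ := hbox
  have := h hΓ (fun hd => absurd (force_bigOr.mp hd) (by push_neg; exact hΔ)) v hv
  simp only [tau, Force] at this
  have := this force_bigAnd_zero
  rw [force_bigOr] at this
  obtain ⟨B, hB, hFB⟩ := this
  rw [Multiset.mem_singleton] at hB
  subst hB
  exact hA hFB

lemma base_bbox {Γ Δ : Multiset Formula} {A : Formula} {w : W} :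
    Force R V w (tau (LNS.dn Γ (A.bbox ::ₘ Δ) (.single 0 {A}))) →
      Force R V w (tau (LNS.single Γ (A.bbox ::ₘ Δ))) := by
  simp only [tau, Force]
  intro h hΓ
  by_contra hΔ
  rw [force_bigOr] at hΔ
  push_neg at hΔ
  have hbox : ¬ Force R V w (Formula.bbox A) := hΔ _ (Multiset.mem_cons_self _ _)
  simp only [Force] at hbox
  push_neg at hbox
  obtain ⟨v, hv, hA⟩ := hbox
  have := h hΓ (fun hd => absurd (force_bigOr.mp hd) (by push_neg; exact hΔ)) v hv
  simp only [tau, Force] at this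
  have := this force_bigAnd_zero
  rw [force_bigOr] at this
  obtain ⟨B, hB, hFB⟩ := this
  rw [Multiset.mem_singleton] at hB
  subst hB
  exact hA hFB

end Aux

/-- Soundness of the simplified rules (□_R) and (■_R) of LNS_Kt*: if the
conclusion `G ⇗ Γ ⇒ Δ,□A` (resp. `G ⇗ Γ ⇒ Δ,■A`) is falsifiable, then so is
the premiss `G ⇗ Γ ⇒ Δ,□A ↗ ε ⇒ A` (resp. `G ⇗ Γ ⇒ Δ,■A ↙ ε ⇒ A`). -/
theorem boxR_bboxR_sound :
    (∀ (G : Ctx) (Γ Δ : Multiset Formula) (A : Formula),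
      Falsifiable (plug G (.single Γ (A.box ::ₘ Δ))) →
        Falsifiable (plug G (.up Γ (A.box ::ₘ Δ) (.single 0 {A})))) ∧
    (∀ (G : Ctx) (Γ Δ : Multiset Formula) (A : Formula),
      Falsifiable (plug G (.single Γ (A.bbox ::ₘ Δ))) →
        Falsifiable (plug G (.dn Γ (A.bbox ::ₘ Δ) (.single 0 {A})))) := by
  constructor
  · rintro G Γ Δ A ⟨W, hW, R, V, w, hw⟩
    exact ⟨W, hW, R, V, w, fun hf => hw (plug_mono (fun v => base_box) G w hf)⟩
  · rintro G Γ Δ A ⟨W, hW, R, V, w, hw⟩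
    exact ⟨W, hW, R, V, w, fun hf => hw (plug_mono (fun v => base_bbox) G w hf)⟩
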